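/- Let F_q be a finite field, ∂₁^X ∈ F_q^{X₀×X₁} and ∂₂^X ∈ F_q^{X₁×X₂} matrices with ∂₁^X ∂₂^X = 0, and let ∂₁^Y ∈ F_q^{B×A} be a surjective matrix (trivial zeroth homology of the classical code complex Y). Let 𝒳 be the product complex with ∂₂^𝒳(w) = ((∂₂^X ⊗ I_A)w, (I_{X₂} ⊗ ∂₁^Y)w) and ∂₁^𝒳(u, v) = ((∂₁^X ⊗ I_A)u, −(I_{X₁} ⊗ ∂₁^Y)u + (∂₂^X ⊗ I_B)v). Then the middle homology of 𝒳 satisfies dim_{F_q}(ker ∂₁^𝒳 / im ∂₂^𝒳) = dim_{F_q}(ker ∂₁^X / im ∂₂^X) · dim_{F_q}(ker ∂₁^Y). -/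

import Mathlib

open Matrix Kronecker

set_option linter.unusedSectionVars false
set_option maxHeartbeats 1000000
set_option synthInstance.maxHeartbeats 400000

noncomputable section

variable {F : Type*} [Field F] [Fintype F]
variable {X₀ X₁ X₂ A B : Type*}
  [Fintype X₀] [Fintype X₁] [Fintype X₂] [Fintype A] [Fintype B]
  [DecidableEq X₀] [DecidableEq X₁] [DecidableEq X₂] [DecidableEq A] [DecidableEq B]

/-- The boundary map `∂₂^𝒳(w) = ((∂₂^X ⊗ I_A)w, (I_{X₂} ⊗ ∂₁^Y)w)` of the
high-dimensional-expander product complex. -/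
def hdxD2 (dX2 : Matrix X₁ X₂ F) (dY : Matrix B A F) :
    ((X₂ × A) → F) →ₗ[F] ((X₁ × A) → F) × ((X₂ × B) → F) :=
  LinearMap.prod (dX2 ⊗ₖ (1 : Matrix A A F)).mulVecLin
    ((1 : Matrix X₂ X₂ F) ⊗ₖ dY).mulVecLin

/-- The boundary map `∂₁^𝒳(u, v) = ((∂₁^X ⊗ I_A)u, −(I_{X₁} ⊗ ∂₁^Y)u + (∂₂^X ⊗ I_B)v)`
of the high-dimensional-expander product complex. -/
def hdxD1 (dX1 : Matrix X₀ X₁ F) (dX2 : Matrix X₁ X₂ F) (dY : Matrix B A F) :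
    (((X₁ × A) → F) × ((X₂ × B) → F)) →ₗ[F] ((X₀ × A) → F) × ((X₁ × B) → F) :=
  LinearMap.prod
    ((dX1 ⊗ₖ (1 : Matrix A A F)).mulVecLin.comp (LinearMap.fst F _ _))
    ((dX2 ⊗ₖ (1 : Matrix B B F)).mulVecLin.comp (LinearMap.snd F _ _)
      - ((1 : Matrix X₁ X₁ F) ⊗ₖ dY).mulVecLin.comp (LinearMap.fst F _ _))

lemma kron_one_mulVec {m n p : Type*} [Fintype n] [Fintype p] [DecidableEq p]
    (M : Matrix m n F) (w : n × p → F) (i : m) (j : p) :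
    ((M ⊗ₖ (1 : Matrix p p F)).mulVec w) (i, j) = M.mulVec (fun i' => w (i', j)) i := by
  simp [Matrix.mulVec, dotProduct, Fintype.sum_prod_type, Matrix.one_apply, mul_ite, ite_mul,
    Finset.sum_ite_eq', mul_comm, mul_assoc]

lemma one_kron_mulVec {m n p : Type*} [Fintype n] [Fintype p] [DecidableEq p]
    (N : Matrix m n F) (w : p × n → F) (i : p) (b : m) :
    (((1 : Matrix p p F) ⊗ₖ N).mulVec w) (i, b) = N.mulVec (fun j => w (i, j)) b := by
  simp [Matrix.mulVec, dotProduct, Fintype.sum_prod_type, Matrix.one_apply, mul_ite, ite_mul,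
    Finset.sum_ite_eq, Finset.sum_ite_eq', mul_comm, mul_assoc]

lemma mulVec_sum {m n : Type*} [Fintype n] (M : Matrix m n F) (f : n → F) (i : m) :
    M.mulVec f i = ∑ x, M i x * f x := rfl

def matVec {H : Type*} [AddCommGroup H] [Module F H] (M : Matrix B A F) :
    (A → H) →ₗ[F] (B → H) where
  toFun f b := ∑ j, M b j • f j
  map_add' f g := by funext b; simp [smul_add, Finset.sum_add_distrib]
  map_smul' c f := by funext b; simp [Finset.smul_sum, smul_comm c]

lemma hdxD1_apply (dX1 : Matrix X₀ X₁ F) (dX2 : Matrix X₁ X₂ F) (dY : Matrix B A F)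
    (u : (X₁ × A) → F) (v : (X₂ × B) → F) :
    hdxD1 dX1 dX2 dY (u, v) =
      ((dX1 ⊗ₖ (1 : Matrix A A F)).mulVec u,
       (dX2 ⊗ₖ (1 : Matrix B B F)).mulVec v - ((1 : Matrix X₁ X₁ F) ⊗ₖ dY).mulVec u) := rfl

lemma hdxD2_apply (dX2 : Matrix X₁ X₂ F) (dY : Matrix B A F) (w : (X₂ × A) → F) :
    hdxD2 dX2 dY w =
      ((dX2 ⊗ₖ (1 : Matrix A A F)).mulVec w, ((1 : Matrix X₂ X₂ F) ⊗ₖ dY).mulVec w) := rfl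

lemma mem_ker_hdxD1 (dX1 : Matrix X₀ X₁ F) (dX2 : Matrix X₁ X₂ F) (dY : Matrix B A F)
    (u : (X₁ × A) → F) (v : (X₂ × B) → F) :
    (u, v) ∈ LinearMap.ker (hdxD1 dX1 dX2 dY) ↔
      (dX1 ⊗ₖ (1 : Matrix A A F)).mulVec u = 0 ∧
      (dX2 ⊗ₖ (1 : Matrix B B F)).mulVec v = ((1 : Matrix X₁ X₁ F) ⊗ₖ dY).mulVec u := by
  rw [LinearMap.mem_ker, hdxD1_apply, Prod.ext_iff]
  simp [sub_eq_zero]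


/-- if `∂₁^X ∂₂^X = 0` and `∂₁^Y` is surjective (trivial zeroth homology of
the classical code complex), then the middle homology of the product complex `𝒳` has
dimension `dim H₁(X) · dim(ker ∂₁^Y)`. -/
theorem hdx_middle_homology_dimension
    (dX1 : Matrix X₀ X₁ F) (dX2 : Matrix X₁ X₂ F) (hX : dX1 * dX2 = 0)
    (dY : Matrix B A F) (hY : Function.Surjective dY.mulVecLin) :
    Module.finrank F
      (↥(LinearMap.ker (hdxD1 dX1 dX2 dY)) ⧸
        Submodule.comap (LinearMap.ker (hdxD1 dX1 dX2 dY)).subtype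
          (LinearMap.range (hdxD2 dX2 dY))) =
    Module.finrank F
      (↥(LinearMap.ker dX1.mulVecLin) ⧸
        Submodule.comap (LinearMap.ker dX1.mulVecLin).subtype
          (LinearMap.range dX2.mulVecLin)) *
    Module.finrank F ↥(LinearMap.ker dY.mulVecLin) := by
  classical
  -- right inverse of dY
  have hYs : Function.Surjective dY.mulVec := by
    intro y; obtain ⟨x, hx⟩ := hY y; exact ⟨x, by simpa using hx⟩
  obtain ⟨R, hR⟩ := Matrix.mulVec_surjective_iff_exists_right_inverse.mp hYs
  have hRsum : ∀ (b b' : B), (∑ j, dY b j * R j b') = (1 : Matrix B B F) b b' := by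
    intro b b'
    have := congrFun (congrFun hR b) b'
    simpa [Matrix.mul_apply] using this
  set Kx := LinearMap.ker dX1.mulVecLin with hKx
  set Ix := Submodule.comap Kx.subtype (LinearMap.range dX2.mulVecLin) with hIx
  set T : (A → (↥Kx ⧸ Ix)) →ₗ[F] (B → (↥Kx ⧸ Ix)) := matVec dY with hT
  -- columns of kernel elements lie in Kx
  have mem_col : ∀ (p : ↥(LinearMap.ker (hdxD1 dX1 dX2 dY))) (j : A),
      (fun i => p.1.1 (i, j)) ∈ Kx := by
    rintro ⟨⟨u, v⟩, hp⟩ j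
    rw [mem_ker_hdxD1] at hp
    simp only [hKx, LinearMap.mem_ker, Matrix.mulVecLin_apply]
    funext i
    have := congrFun hp.1 (i, j)
    rw [kron_one_mulVec] at this
    simpa using this
  let φ : ↥(LinearMap.ker (hdxD1 dX1 dX2 dY)) →ₗ[F] (A → (↥Kx ⧸ Ix)) :=
  { toFun := fun p j => Submodule.Quotient.mk (⟨fun i => p.1.1 (i, j), mem_col p j⟩ : ↥Kx)
    map_add' := by
      intro p q; funext j
      dsimp only [Pi.add_apply]
      rw [← Submodule.Quotient.mk_add]
      rfl
    map_smul' := by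
      intro c p; funext j
      dsimp only [Pi.smul_apply, RingHom.id_apply]
      rw [← Submodule.Quotient.mk_smul]
      rfl }
  have hφapp : ∀ (p : ↥(LinearMap.ker (hdxD1 dX1 dX2 dY))) (j : A),
      φ p j = Submodule.Quotient.mk (⟨fun i => p.1.1 (i, j), mem_col p j⟩ : ↥Kx) :=
    fun p j => rfl
  have mk_eq_zero_iff : ∀ (x : ↥Kx), (Submodule.Quotient.mk x : ↥Kx ⧸ Ix) = 0 ↔
      (x : X₁ → F) ∈ LinearMap.range dX2.mulVecLin := by
    intro x
    rw [Submodule.Quotient.mk_eq_zero, hIx, Submodule.mem_comap]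
    rfl
  -- range φ = ker T
  have hrange : LinearMap.range φ = LinearMap.ker T := by
    apply le_antisymm
    · rintro _ ⟨p, rfl⟩
      have hp := (mem_ker_hdxD1 dX1 dX2 dY p.1.1 p.1.2).mp p.2
      rw [LinearMap.mem_ker]
      funext b
      have hsum : T (φ p) b
          = Ix.mkQ (∑ j, dY b j • (⟨fun i => p.1.1 (i, j), mem_col p j⟩ : ↥Kx)) := by
        rw [map_sum]
        simp only [_root_.map_smul]
        rfl
      rw [Pi.zero_apply, hsum, Submodule.mkQ_apply, mk_eq_zero_iff]
      refine ⟨fun x => p.1.2 (x, b), ?_⟩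
      funext i
      have h2 := congrFun hp.2 (i, b)
      rw [kron_one_mulVec, one_kron_mulVec] at h2
      simp only [Matrix.mulVecLin_apply]
      rw [h2]
      simp [Matrix.mulVec, dotProduct, Finset.sum_apply]
    · intro f hf
      choose q hq using fun j => Submodule.Quotient.mk_surjective Ix (f j)
      have hcomb : ∀ b : B,
          ((∑ j, dY b j • q j : ↥Kx) : X₁ → F) ∈ LinearMap.range dX2.mulVecLin := by
        intro b
        rw [← mk_eq_zero_iff]
        have hmkT : (Submodule.Quotient.mk (∑ j, dY b j • q j) : ↥Kx ⧸ Ix) = T f b := by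
          rw [← Submodule.mkQ_apply, map_sum]
          simp only [Submodule.mkQ_apply, Submodule.Quotient.mk_smul, hq]
          rfl
        rw [hmkT, LinearMap.mem_ker.mp hf, Pi.zero_apply]
      choose z hz using hcomb
      set u : (X₁ × A) → F := fun ij => (q ij.2 : X₁ → F) ij.1 with hu
      set v : (X₂ × B) → F := fun xb => z xb.2 xb.1 with hv
      have hmem : (u, v) ∈ LinearMap.ker (hdxD1 dX1 dX2 dY) := by
        rw [mem_ker_hdxD1]
        constructor
        · funext ij
          obtain ⟨i, j⟩ := ij
          rw [kron_one_mulVec]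
          have h0 : dX1.mulVecLin ((q j : ↥Kx) : X₁ → F) = 0 := (q j).2
          have h0' := congrFun h0 i
          rw [Matrix.mulVecLin_apply] at h0'
          exact h0'.trans rfl
        · funext xb
          obtain ⟨i, b⟩ := xb
          rw [kron_one_mulVec, one_kron_mulVec]
          have h3 := congrFun (hz b) i
          simp only [Matrix.mulVecLin_apply] at h3
          rw [show (fun x => v (x, b)) = z b from rfl, h3]
          simp [hu, Matrix.mulVec, dotProduct, Finset.sum_apply]
      refine ⟨⟨(u, v), hmem⟩, ?_⟩
      funext j
      rw [hφapp, ← hq j]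
  -- ker φ = comap
  have hker : LinearMap.ker φ
      = Submodule.comap (LinearMap.ker (hdxD1 dX1 dX2 dY)).subtype
          (LinearMap.range (hdxD2 dX2 dY)) := by
    apply le_antisymm
    · intro p hp
      rw [LinearMap.mem_ker] at hp
      have hcol : ∀ j, (fun i => p.1.1 (i, j)) ∈ LinearMap.range dX2.mulVecLin := by
        intro j
        rw [← mk_eq_zero_iff ⟨_, mem_col p j⟩]
        exact congrFun hp j
      choose w hw using hcol
      have hwv : ∀ j i, dX2.mulVec (w j) i = p.1.1 (i, j) := by
        intro j i
        have := congrFun (hw j) i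
        simpa [Matrix.mulVecLin_apply] using this
      have hpk := (mem_ker_hdxD1 dX1 dX2 dY p.1.1 p.1.2).mp p.2
      set w0 : (X₂ × A) → F := fun xj => w xj.2 xj.1 with hw0
      set v' : (X₂ × B) → F :=
        fun xb => p.1.2 xb - ∑ j, dY xb.2 j * w j xb.1 with hv'
      have hv'ker : ∀ (b : B) (i : X₁), (∑ x, dX2 i x * v' (x, b)) = 0 := by
        intro b i
        have h2 := congrFun hpk.2 (i, b)
        rw [kron_one_mulVec, one_kron_mulVec] at h2
        rw [_root_.mulVec_sum, _root_.mulVec_sum] at h2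
        have hA : (∑ x, dX2 i x * p.1.2 (x, b)) = ∑ j, dY b j * p.1.1 (i, j) := h2
        calc (∑ x, dX2 i x * v' (x, b))
            = (∑ x, dX2 i x * p.1.2 (x, b))
              - ∑ x, ∑ j, dX2 i x * (dY b j * w j x) := by
              simp [hv', mul_sub, Finset.sum_sub_distrib, Finset.mul_sum]
          _ = (∑ j, dY b j * p.1.1 (i, j)) - ∑ j, dY b j * ∑ x, dX2 i x * w j x := by
              rw [hA, Finset.sum_comm]
              congr 1
              refine Finset.sum_congr rfl fun j _ => ?_
              rw [Finset.mul_sum]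
              refine Finset.sum_congr rfl fun x _ => by ring
          _ = 0 := by
              simp only [fun j => _root_.mulVec_sum dX2 (w j) i ▸ hwv j i]
              simp [fun j => (_root_.mulVec_sum dX2 (w j) i).symm.trans (hwv j i)]
      set w' : (X₂ × A) → F := fun xj => ∑ b, v' (xj.1, b) * R xj.2 b with hw'
      rw [Submodule.mem_comap]
      refine ⟨w0 + w', ?_⟩
      rw [hdxD2_apply]
      have hfst : (dX2 ⊗ₖ (1 : Matrix A A F)).mulVec (w0 + w') = p.1.1 := by
        funext ij
        obtain ⟨i, j⟩ := ij
        rw [kron_one_mulVec, _root_.mulVec_sum]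
        have : (∑ x, dX2 i x * (w0 + w') (x, j))
            = (∑ x, dX2 i x * w j x) + ∑ b, R j b * ∑ x, dX2 i x * v' (x, b) := by
          simp only [Pi.add_apply, mul_add, Finset.sum_add_distrib, hw0, hw']
          congr 1
          simp_rw [Finset.mul_sum]
          rw [Finset.sum_comm]
          exact Finset.sum_congr rfl fun b _ => Finset.sum_congr rfl fun x _ => by ring
        rw [this]
        simp only [hv'ker, mul_zero, Finset.sum_const_zero, add_zero]
        rw [← _root_.mulVec_sum]
        exact hwv j i
      have hsnd : ((1 : Matrix X₂ X₂ F) ⊗ₖ dY).mulVec (w0 + w') = p.1.2 := by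
        funext xb
        obtain ⟨x, b⟩ := xb
        rw [one_kron_mulVec, _root_.mulVec_sum]
        have : (∑ j, dY b j * (w0 + w') (x, j))
            = (∑ j, dY b j * w j x) + ∑ b', (∑ j, dY b j * R j b') * v' (x, b') := by
          simp only [Pi.add_apply, mul_add, Finset.sum_add_distrib, hw0, hw']
          congr 1
          simp_rw [Finset.mul_sum]
          rw [Finset.sum_comm]
          refine Finset.sum_congr rfl fun b' _ => ?_
          rw [Finset.sum_mul]
          exact Finset.sum_congr rfl fun j _ => by ring
        rw [this]
        simp only [hRsum, Matrix.one_apply, ite_mul, one_mul, zero_mul,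
          Finset.sum_ite_eq, Finset.mem_univ, if_true]
        simp [hv']
      exact Prod.ext hfst hsnd
    · intro p hp
      rw [Submodule.mem_comap] at hp
      obtain ⟨w, hw⟩ := hp
      rw [LinearMap.mem_ker]
      funext j
      rw [hφapp, Pi.zero_apply, mk_eq_zero_iff]
      refine ⟨fun x => w (x, j), ?_⟩
      funext i
      have h1 : (dX2 ⊗ₖ (1 : Matrix A A F)).mulVec w = p.1.1 := congrArg Prod.fst hw
      have := congrFun h1 (i, j)
      rw [kron_one_mulVec] at this
      simpa [Matrix.mulVecLin_apply] using this
  -- T is surjective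
  have hTsurj : Function.Surjective T := by
    intro g
    refine ⟨fun j => ∑ b, R j b • g b, ?_⟩
    funext b
    show (∑ j, dY b j • ∑ b', R j b' • g b') = g b
    have : (∑ j, dY b j • ∑ b', R j b' • g b')
        = ∑ b', (∑ j, dY b j * R j b') • g b' := by
      simp only [Finset.smul_sum, smul_smul]
      rw [Finset.sum_comm]
      simp [Finset.sum_smul]
    rw [this]
    simp [hRsum, Matrix.one_apply, ite_smul, Finset.sum_ite_eq]
  -- dimension bookkeeping
  rw [← hker, LinearEquiv.finrank_eq φ.quotKerEquivRange, LinearEquiv.finrank_eq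
    (LinearEquiv.ofEq _ _ hrange)]
  have e1 : Fintype.card A * Module.finrank F (↥Kx ⧸ Ix)
      = Fintype.card B * Module.finrank F (↥Kx ⧸ Ix)
        + Module.finrank F ↥(LinearMap.ker T) := by
    have h := LinearMap.finrank_range_add_finrank_ker T
    rw [LinearMap.range_eq_top.mpr hTsurj, finrank_top] at h
    haveI : Module.Free F (↥Kx ⧸ Ix) := Module.Free.of_divisionRing F _
    have hA : Module.finrank F (A → (↥Kx ⧸ Ix))
        = Fintype.card A * Module.finrank F (↥Kx ⧸ Ix) := by
      rw [Module.finrank_pi_fintype F]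
      simp [Finset.sum_const, mul_comm]
    have hB : Module.finrank F (B → (↥Kx ⧸ Ix))
        = Fintype.card B * Module.finrank F (↥Kx ⧸ Ix) := by
      rw [Module.finrank_pi_fintype F]
      simp [Finset.sum_const, mul_comm]
    rw [← hA, ← hB, ← h]
  have e2 : Fintype.card A = Fintype.card B + Module.finrank F ↥(LinearMap.ker dY.mulVecLin) := by
    have h := LinearMap.finrank_range_add_finrank_ker dY.mulVecLin
    rw [LinearMap.range_eq_top.mpr hY, finrank_top] at h
    rw [show Fintype.card A = Module.finrank F (A → F) from (Module.finrank_pi F).symm,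
      show Fintype.card B = Module.finrank F (B → F) from (Module.finrank_pi F).symm, ← h]
  set h1 := Module.finrank F (↥Kx ⧸ Ix)
  set kT := Module.finrank F ↥(LinearMap.ker T)
  set kY := Module.finrank F ↥(LinearMap.ker dY.mulVecLin)
  have e3 : (Fintype.card B + kY) * h1 = Fintype.card B * h1 + kY * h1 := by ring
  rw [e2, e3] at e1
  have : kT = kY * h1 := by omega
  rw [this, mul_comm]
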